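/- If player TWO has a winning strategy in the length-ω game G_1^ω(𝒪,𝒪) on a separable metric space X, then X is countable. -/

import Mathlib

open Set Filter Topology TopologicalSpace

/-- `𝒰` is an open cover of the space `Z`. -/
def IsOpenCover {Z : Type*} [TopologicalSpace Z] (𝒰 : Set (Set Z)) : Prop :=
  (∀ U ∈ 𝒰, IsOpen U) ∧ ⋃₀ 𝒰 = univ

/-- `𝒰` is an ω-cover: an open cover, not containing the whole space,
such that every finite subset of the space is contained in a member. -/
def IsOmegaCover {Z : Type*} [TopologicalSpace Z] (𝒰 : Set (Set Z)) : Prop :=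
  IsOpenCover 𝒰 ∧ univ ∉ 𝒰 ∧ ∀ F : Set Z, F.Finite → ∃ U ∈ 𝒰, F ⊆ U

/-- The Menger property `S_fin(𝒪,𝒪)`. -/
def Menger (Z : Type*) [TopologicalSpace Z] : Prop :=
  ∀ 𝒰 : ℕ → Set (Set Z), (∀ n, IsOpenCover (𝒰 n)) →
    ∃ 𝒱 : ℕ → Set (Set Z), (∀ n, (𝒱 n).Finite ∧ 𝒱 n ⊆ 𝒰 n) ∧ ⋃₀ (⋃ n, 𝒱 n) = univ

/-- The Rothberger property `S_1(𝒪,𝒪)`. -/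
def Rothberger (Z : Type*) [TopologicalSpace Z] : Prop :=
  ∀ 𝒰 : ℕ → Set (Set Z), (∀ n, IsOpenCover (𝒰 n)) →
    ∃ U : ℕ → Set Z, (∀ n, U n ∈ 𝒰 n) ∧ (⋃ n, U n) = univ

/-- Selective screenability `S_c(𝒪,𝒪)`. -/
def SelScreenable (Z : Type*) [TopologicalSpace Z] : Prop :=
  ∀ 𝒰 : ℕ → Set (Set Z), (∀ n, IsOpenCover (𝒰 n)) →
    ∃ 𝒱 : ℕ → Set (Set Z),
      (∀ n, (𝒱 n).PairwiseDisjoint id ∧ (∀ V ∈ 𝒱 n, IsOpen V) ∧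
        (∀ V ∈ 𝒱 n, ∃ U ∈ 𝒰 n, V ⊆ U)) ∧
      ⋃₀ (⋃ n, 𝒱 n) = univ

/-- The Hurewicz property. -/
def Hurewicz (Z : Type*) [TopologicalSpace Z] : Prop :=
  ∀ 𝒰 : ℕ → Set (Set Z), (∀ n, IsOpenCover (𝒰 n)) →
    ∃ 𝒱 : ℕ → Set (Set Z), (∀ n, (𝒱 n).Finite ∧ 𝒱 n ⊆ 𝒰 n) ∧
      ∀ z : Z, ∀ᶠ n in atTop, z ∈ ⋃₀ 𝒱 n

/-- `𝒰` is a γ-cover: an infinite family of open sets such that every point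
lies in all but finitely many members. -/
def IsGammaCover {Z : Type*} [TopologicalSpace Z] (𝒰 : Set (Set Z)) : Prop :=
  𝒰.Infinite ∧ (∀ U ∈ 𝒰, IsOpen U) ∧ ∀ z : Z, {U ∈ 𝒰 | z ∉ U}.Finite

/-- `S_1(Ω,Γ)`: from every sequence of ω-covers one can pick one member each
so that the selections form a γ-cover (the γ-set property). -/
def S1OmegaGamma (Z : Type*) [TopologicalSpace Z] : Prop :=
  ∀ 𝒰 : ℕ → Set (Set Z), (∀ n, IsOmegaCover (𝒰 n)) →
    ∃ U : ℕ → Set Z, (∀ n, U n ∈ 𝒰 n) ∧ IsGammaCover (range U)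

/-- `S_1(Ω,𝒪^gp)`: from every sequence of ω-covers one can pick one member each
so that the selections form a groupable cover. -/
def S1OmegaGp (Z : Type*) [TopologicalSpace Z] : Prop :=
  ∀ 𝒰 : ℕ → Set (Set Z), (∀ n, IsOmegaCover (𝒰 n)) →
    ∃ V : ℕ → Set Z, (∀ n, V n ∈ 𝒰 n) ∧
      ∃ f : ℕ → ℕ, StrictMono f ∧
        ∀ z : Z, ∀ᶠ k in atTop, ∃ j ∈ Set.Ico (f k) (f (k + 1)), z ∈ V j

/-- TWO has a winning strategy in the length-`α` game `G_1^α(𝒪,𝒪)` on `Z`: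
a history-dependent selection rule whose picks are legal and cover `Z`
whenever ONE plays open covers. -/
def TwoWinsG1 (Z : Type*) [TopologicalSpace Z] (α : Ordinal.{0}) : Prop :=
  ∃ σ : (Ordinal.{0} → Set (Set Z)) → Ordinal.{0} → Set Z,
    (∀ O O' : Ordinal.{0} → Set (Set Z), ∀ γ, (∀ β ≤ γ, O β = O' β) → σ O γ = σ O' γ) ∧
    ∀ O : Ordinal.{0} → Set (Set Z), (∀ γ, γ < α → IsOpenCover (O γ)) →
      (∀ γ, γ < α → σ O γ ∈ O γ) ∧ ∀ z : Z, ∃ γ, γ < α ∧ z ∈ σ O γ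

/-- TWO has a winning strategy in the length-`α` game `G_fin^α(𝒪,𝒪)` on `Z`. -/
def TwoWinsGfin (Z : Type*) [TopologicalSpace Z] (α : Ordinal.{0}) : Prop :=
  ∃ σ : (Ordinal.{0} → Set (Set Z)) → Ordinal.{0} → Set (Set Z),
    (∀ O O' : Ordinal.{0} → Set (Set Z), ∀ γ, (∀ β ≤ γ, O β = O' β) → σ O γ = σ O' γ) ∧
    ∀ O : Ordinal.{0} → Set (Set Z), (∀ γ, γ < α → IsOpenCover (O γ)) →
      (∀ γ, γ < α → (σ O γ).Finite ∧ σ O γ ⊆ O γ) ∧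
      ∀ z : Z, ∃ γ, γ < α ∧ z ∈ ⋃₀ σ O γ

/-- A Lusin set: an uncountable set of reals meeting every nowhere dense set
in a countable set. -/
def IsLusin (L : Set ℝ) : Prop :=
  ¬ L.Countable ∧ ∀ N : Set ℝ, IsNowhereDense N → (L ∩ N).Countable

/-- A Sierpiński set: an uncountable set of reals meeting every Lebesgue null
set in a countable set. -/
def IsSierpinski (S : Set ℝ) : Prop :=
  ¬ S.Countable ∧ ∀ N : Set ℝ, MeasureTheory.volume N = 0 → (S ∩ N).Countable

set_option linter.unusedSectionVars false

namespace GTaux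

variable {X : Type*} [TopologicalSpace X]

/-- Extend a natural-indexed sequence of families to an ordinal-indexed one. -/
noncomputable def extSeq (f : ℕ → Set (Set X)) : Ordinal.{0} → Set (Set X) :=
  fun γ => ⋃ n : ℕ, if γ = (n : Ordinal) then f n else ∅

lemma extSeq_nat (f : ℕ → Set (Set X)) (m : ℕ) : extSeq f (m : Ordinal) = f m := by
  ext U
  simp only [extSeq, Set.mem_iUnion]
  constructor
  · rintro ⟨n, hn⟩
    rcases eq_or_ne m n with rfl | hmn
    · simpa using hn
    · rw [if_neg (by simpa [Nat.cast_inj] using hmn)] at hn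
      exact absurd hn (by simp)
  · intro hU; exact ⟨m, by simpa using hU⟩

/-- Pad a finite list of covers to an ordinal-indexed play, using `{univ}` beyond. -/
noncomputable def pad (l : List (Set (Set X))) : Ordinal.{0} → Set (Set X) :=
  extSeq (fun n => l.getD n {Set.univ})

lemma isOpenCover_univ : IsOpenCover ({Set.univ} : Set (Set X)) :=
  ⟨by simp [isOpen_univ], by simp⟩

lemma pad_isOpenCover {l : List (Set (Set X))} (hl : ∀ 𝒰 ∈ l, IsOpenCover 𝒰)
    {γ : Ordinal.{0}} (hγ : γ < Ordinal.omega0) : IsOpenCover (pad l γ) := by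
  obtain ⟨n, rfl⟩ := Ordinal.lt_omega0.1 hγ
  rw [pad, extSeq_nat]
  by_cases hn : n < l.length
  · rw [List.getD_eq_getElem l _ hn]
    exact hl _ (l.getElem_mem hn)
  · rw [List.getD_eq_default l _ (le_of_not_gt hn)]
    exact isOpenCover_univ

/-- History building: given a response rule `nxt` and an enumeration `e` of basic sets,
`buildList nxt e t` is the (ordered) list of ONE's moves determined by the reversed
index list `t`. -/
def buildList (nxt : List (Set (Set X)) → Set X → Set (Set X)) (e : ℕ → Set X) :
    List ℕ → List (Set (Set X))
  | [] => []
  | n :: t =>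
      let l := buildList nxt e t
      l ++ [nxt l (e n)]

def iterList (pick : List ℕ → ℕ) : ℕ → List ℕ
  | 0 => []
  | k + 1 => pick (iterList pick k) :: iterList pick k

end GTaux

open GTaux

/-- Galvin–Telgársky: if TWO has a winning strategy in `G_1^ω(𝒪,𝒪)` on `X`,
then `X` is countable. -/
theorem countable_of_twoWinsG1_omega
    {X : Type*} [MetricSpace X] [SeparableSpace X]
    (h : TwoWinsG1 X Ordinal.omega0) :
    Countable X := by
  classical
  rcases isEmpty_or_nonempty X with hX | hX
  · infer_instance
  obtain ⟨σ, hcont, hwin⟩ := h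
  haveI : SecondCountableTopology X := UniformSpace.secondCountable_of_separable X
  obtain ⟨b, hbc, -, hbB⟩ := TopologicalSpace.exists_countable_basis X
  obtain ⟨e, he⟩ := (hbc.insert ∅).exists_eq_range ⟨∅, mem_insert _ _⟩
  -- Key lemma: trap points.
  have key : ∀ l : List (Set (Set X)), ∃ x : X,
      (∀ 𝒰 ∈ l, IsOpenCover 𝒰) → ∀ U : Set X, IsOpen U → x ∈ U →
        ∃ 𝒰, _root_.IsOpenCover 𝒰 ∧ σ (pad (l ++ [𝒰])) (l.length : Ordinal) ⊆ U := by
    intro l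
    by_contra hcon
    push_neg at hcon
    -- from each x extract a bad neighborhood
    have hcon' : ∀ x : X, ∃ U : Set X, IsOpen U ∧ x ∈ U ∧
        ∀ 𝒰, _root_.IsOpenCover 𝒰 → ¬ σ (pad (l ++ [𝒰])) (l.length : Ordinal) ⊆ U := by
      intro x
      obtain ⟨hl, U, hUo, hxU, hbad⟩ := hcon x
      exact ⟨U, hUo, hxU, fun 𝒰 h𝒰 hsub => hbad 𝒰 h𝒰 hsub⟩
    choose Ux hUo hxU hbad using hcon'
    have hl : ∀ 𝒰 ∈ l, IsOpenCover 𝒰 := by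
      -- if l were bad, hcon would be vacuous; derive from hcon applied to arbitrary x
      intro 𝒰 h𝒰
      obtain ⟨hl', _⟩ := hcon (Classical.arbitrary X)
      exact hl' 𝒰 h𝒰
    set 𝒰s : Set (Set X) := Set.range Ux with h𝒰s
    have hcov : IsOpenCover 𝒰s := by
      constructor
      · rintro U ⟨x, rfl⟩; exact hUo x
      · apply eq_univ_of_forall
        intro x
        exact ⟨Ux x, ⟨x, rfl⟩, hxU x⟩
    have hgood : ∀ γ, γ < Ordinal.omega0 → IsOpenCover (pad (l ++ [𝒰s]) γ) := by
      intro γ hγ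
      refine pad_isOpenCover ?_ hγ
      intro 𝒰 h𝒰
      rcases List.mem_append.1 h𝒰 with h | h
      · exact hl _ h
      · rw [List.mem_singleton.1 h]; exact hcov
    obtain ⟨hleg, -⟩ := hwin _ hgood
    have hmem : σ (pad (l ++ [𝒰s])) (l.length : Ordinal) ∈ 𝒰s := by
      have := hleg (l.length : Ordinal) (Ordinal.nat_lt_omega0 _)
      rw [pad, extSeq_nat, List.getD_eq_getElem _ _ (by simp),
        List.getElem_append_right (le_refl _)] at this
      simp only [Nat.sub_self, List.getElem_cons_zero] at this
      exact this
    obtain ⟨x, hx⟩ := hmem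
    exact hbad x 𝒰s hcov (hx ▸ subset_rfl)
  choose pt hpt using key
  -- Next-move rule.
  have nxtex : ∀ (l : List (Set (Set X))) (U : Set X), ∃ 𝒱 : Set (Set X),
      IsOpenCover 𝒱 ∧ ((∀ 𝒰 ∈ l, IsOpenCover 𝒰) → IsOpen U → pt l ∈ U →
        σ (pad (l ++ [𝒱])) (l.length : Ordinal) ⊆ U) := by
    intro l U
    by_cases hg : (∀ 𝒰 ∈ l, IsOpenCover 𝒰) ∧ IsOpen U ∧ pt l ∈ U
    · obtain ⟨𝒰, h𝒰, hsub⟩ := hpt l hg.1 U hg.2.1 hg.2.2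
      exact ⟨𝒰, h𝒰, fun _ _ _ => hsub⟩
    · refine ⟨{Set.univ}, isOpenCover_univ, fun h1 h2 h3 => absurd ⟨h1, h2, h3⟩ hg⟩
  choose nxt hnxtc hnxts using nxtex
  set G : List ℕ → List (Set (Set X)) := buildList nxt e with hG
  have hGgood : ∀ t : List ℕ, ∀ 𝒰 ∈ G t, IsOpenCover 𝒰 := by
    intro t
    induction t with
    | nil => intro 𝒰 h𝒰; simp [hG, buildList] at h𝒰
    | cons n t ih =>
        intro 𝒰 h𝒰
        simp only [hG, buildList] at h𝒰
        rcases List.mem_append.1 h𝒰 with h | h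
        · exact ih _ h
        · rw [List.mem_singleton.1 h]; exact hnxtc _ _
  have hGlen : ∀ t : List ℕ, (G t).length = t.length := by
    intro t
    induction t with
    | nil => simp [hG, buildList]
    | cons n t ih => rw [hG] at ih; simp [hG, buildList, ih]
  -- Surjectivity of trap points over basis-indexed histories.
  have hsurj : Function.Surjective (fun t : List ℕ => pt (G t)) := by
    intro x
    by_contra hx
    push_neg at hx
    have sel : ∀ t : List ℕ, ∃ n : ℕ, IsOpen (e n) ∧ pt (G t) ∈ e n ∧ x ∉ e n := by
      intro t
      have hne : pt (G t) ≠ x := hx t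
      have hopen : IsOpen ({x}ᶜ : Set X) := isClosed_singleton.isOpen_compl
      obtain ⟨B, hBb, hpB, hBsub⟩ :=
        hbB.exists_subset_of_mem_open (show pt (G t) ∈ ({x}ᶜ : Set X) by simpa) hopen
      have : B ∈ Set.range e := by rw [← he]; exact mem_insert_of_mem _ hBb
      obtain ⟨n, rfl⟩ := this
      exact ⟨n, hbB.isOpen hBb, hpB, fun hxB => (hBsub hxB) rfl⟩
    choose pick hpo hpm hpx using sel
    set T : ℕ → List ℕ := iterList pick with hT
    set c : ℕ → Set (Set X) := fun k => nxt (G (T k)) (e (pick (T k))) with hc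
    have hTsucc : ∀ k, G (T (k + 1)) = G (T k) ++ [c k] := by
      intro k; simp [hT, iterList, hG, buildList, hc]
    have hTlen : ∀ k, (G (T k)).length = k := by
      intro k
      induction k with
      | zero => simp [hT, iterList, hG, buildList]
      | succ k ih => rw [hTsucc k]; simp [ih]
    have hget : ∀ k, ∀ m < k, (G (T k)).getD m {Set.univ} = c m := by
      intro k
      induction k with
      | zero => intro m hm; omega
      | succ k ih =>
          intro m hm
          rw [hTsucc k]
          rcases Nat.lt_or_ge m k with h | h
          · rw [List.getD_append _ _ _ _ (by rw [hTlen]; exact h)]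
            exact ih m h
          · have hmk : m = k := by omega
            subst hmk
            rw [List.getD_eq_getElem _ _ (by simp [hTlen]),
              List.getElem_append_right (by rw [hTlen])]
            simp [hTlen]
    set Op : Ordinal.{0} → Set (Set X) := extSeq c with hOp
    have hOpgood : ∀ γ, γ < Ordinal.omega0 → IsOpenCover (Op γ) := by
      intro γ hγ
      obtain ⟨n, rfl⟩ := Ordinal.lt_omega0.1 hγ
      rw [hOp, extSeq_nat]
      exact hnxtc _ _
    obtain ⟨-, hwins⟩ := hwin Op hOpgood
    obtain ⟨γ, hγ, hxγ⟩ := hwins x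
    obtain ⟨k, rfl⟩ := Ordinal.lt_omega0.1 hγ
    have heq : σ Op (k : Ordinal) = σ (pad (G (T (k + 1)))) (k : Ordinal) := by
      apply hcont
      intro β hβ
      have hβω : β < Ordinal.omega0 := lt_of_le_of_lt hβ (Ordinal.nat_lt_omega0 _)
      obtain ⟨m, rfl⟩ := Ordinal.lt_omega0.1 hβω
      have hmk : m ≤ k := by exact_mod_cast hβ
      rw [hOp, extSeq_nat, pad, extSeq_nat, hget (k + 1) m (by omega)]
    have hsub : σ (pad (G (T (k + 1)))) (k : Ordinal) ⊆ e (pick (T k)) := by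
      have := hnxts (G (T k)) (e (pick (T k))) (hGgood _) (hpo _) (hpm _)
      rw [← hTsucc k] at this
      rwa [hTlen k] at this
    exact hpx (T k) (hsub (heq ▸ hxγ))
  exact hsurj.countable
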